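/- Let R be of type E_7 and set v_4 := s_1 s_3 s_4 s_5 s_2 s_4 s_3 s_6 s_5 s_4 s_1 s_2 s_3 s_7 s_6 s_5 s_4 ∈ W. Then: (1) w_{0, S∖{α_1, α_2}}(α_1) = α_1 + α_3 + α_4 + α_5 + α_6 + α_7 and v_4^{-1} w_{0, S∖{α_1}} w_{0, S∖{α_1, α_2}}(α_1) = α_5 + α_6 + α_7; (2) w_{0, S∖{α_1, α_3}}(α_1) = α_1 and v_4^{-1} w_{0, S∖{α_1}} w_{0, S∖{α_1, α_3}}(α_1) = α_1 + 2α_2 + 2α_3 + 3α_4 + 3α_5 + 2α_6 + α_7; (3) w_{0, S∖{α_1, α_4}}(α_1) = α_1 + α_3 and v_4^{-1} w_{0, S∖{α_1}} w_{0, S∖{α_1, α_4}}(α_1) = α_1 + α_2 + 2α_3 + 2α_4 + 2α_5 + 2α_6 + α_7; (4) w_{0, S∖{α_1, α_5}}(α_1) = α_1 + α_2 + α_3 + α_4 and v_4^{-1} w_{0, S∖{α_1}} w_{0, S∖{α_1, α_5}}(α_1) = α_1 + α_2 + 2α_3 + 2α_4 + 2α_5 + α_6; (5) w_{0, S∖{α_1,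 α_6}}(α_1) = α_1 + α_2 + 2α_3 + 2α_4 + α_5 and v_4^{-1} w_{0, S∖{α_1}} w_{0, S∖{α_1, α_6}}(α_1) = α_1 + α_3. -/

import Mathlib

noncomputable section

open scoped Classical

local notation "⟪" x ", " y "⟫" => @inner ℝ _ _ x y

namespace PaperFormal

variable (V : Type*) [NormedAddCommGroup V] [InnerProductSpace ℝ V] [FiniteDimensional ℝ V]

/-- The reflection of the Euclidean space `V` in the hyperplane orthogonal to `v`,
i.e. `β ↦ β - (2⟪β,v⟫/⟪v,v⟫) v`. -/
def sref (v : V) : V ≃ₗᵢ[ℝ] V := Submodule.reflection (ℝ ∙ v)ᗮ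

/-- A reduced irreducible crystallographic root system `R` in the Euclidean space `V`,
together with a fixed base of simple roots `a 1, …, a n`. -/
structure RootSystemWithBase (n : ℕ) : Type _ where
  /-- the set of roots -/
  R : Set V
  /-- the simple roots `a 1, …, a n` (values outside `{1, …, n}` are irrelevant) -/
  a : ℕ → V
  finite : R.Finite
  ne_zero : ∀ β ∈ R, β ≠ 0
  refl_mem : ∀ α ∈ R, ∀ β ∈ R, sref V α β ∈ R
  crystallographic : ∀ α ∈ R, ∀ β ∈ R, ∃ k : ℤ, 2 * ⟪β, α⟫ / ⟪α, α⟫ = (k : ℝ)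
  reduced : ∀ α ∈ R, ∀ t : ℝ, t • α ∈ R → t = 1 ∨ t = -1
  irreducible : ∀ P : Set V, (∀ x ∈ R, ∀ y ∈ R, x ∈ P → ⟪x, y⟫ ≠ 0 → y ∈ P) →
      (R ∩ P).Nonempty → R ⊆ P
  simple_mem : ∀ i ∈ Finset.Icc 1 n, a i ∈ R
  indep : LinearIndependent ℝ (fun i : (Set.Icc 1 n : Set ℕ) => a i)
  span_top : Submodule.span ℝ (a '' Set.Icc 1 n) = ⊤
  root_combo : ∀ β ∈ R, ∃ c : ℕ → ℤ, ((∀ i, 0 ≤ c i) ∨ (∀ i, c i ≤ 0)) ∧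
      β = ∑ i ∈ Finset.Icc 1 n, (c i : ℝ) • a i

namespace RootSystemWithBase

variable {V} {n : ℕ} (S : RootSystemWithBase V n)

/-- The simple reflection `s i` associated to the simple root `a i`. -/
def s (i : ℕ) : V ≃ₗᵢ[ℝ] V := sref V (S.a i)

/-- The product of the simple reflections along a list of indices
(leftmost factor acting last). -/
def prodW (l : List ℕ) : V ≃ₗᵢ[ℝ] V := (l.map S.s).prod

/-- The parabolic subgroup `W_J` of the Weyl group generated by the simple reflections
`s i` for `i ∈ J`. -/
def WJ (J : Set ℕ) : Subgroup (V ≃ₗᵢ[ℝ] V) :=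
  Subgroup.closure (S.s '' (J ∩ Set.Icc 1 n))

/-- The Weyl group `W`, generated by all simple reflections. -/
def W : Subgroup (V ≃ₗᵢ[ℝ] V) := S.WJ Set.univ

/-- The length of `w` with respect to the simple reflections indexed by `J`:
the least length of a word in these reflections expressing `w`. -/
def lenJ (J : Set ℕ) (w : V ≃ₗᵢ[ℝ] V) : ℕ :=
  sInf {k | ∃ l : List ℕ, (∀ i ∈ l, i ∈ J ∩ Set.Icc 1 n) ∧ l.length = k ∧ w = S.prodW l}

/-- The length function `ℓ` of the Weyl group. -/
def len (w : V ≃ₗᵢ[ℝ] V) : ℕ := S.lenJ Set.univ w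

/-- `w` is the longest element `w_{0,J}` of the parabolic subgroup `W_J`. -/
def IsLongest (J : Set ℕ) (w : V ≃ₗᵢ[ℝ] V) : Prop :=
  w ∈ S.WJ J ∧ ∀ x ∈ S.WJ J, S.lenJ J x ≤ S.lenJ J w

/-- `β` is a positive root (with respect to the base `a`). -/
def IsPos (β : V) : Prop :=
  β ∈ S.R ∧ ∃ c : ℕ → ℝ, (∀ i, 0 ≤ c i) ∧ β = ∑ i ∈ Finset.Icc 1 n, c i • S.a i

/-- `β` is a negative root. -/
def IsNeg (β : V) : Prop := S.IsPos (-β)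

/-- `h` is the highest root `α_0`: a root such that `h - β` is a nonnegative combination of
the simple roots for every root `β`. -/
def IsHighest (h : V) : Prop :=
  h ∈ S.R ∧ ∀ β ∈ S.R, ∃ c : ℕ → ℝ, (∀ i, 0 ≤ c i) ∧
    h - β = ∑ i ∈ Finset.Icc 1 n, c i • S.a i

/-- The root system is simply laced: all roots have the same length. -/
def SimplyLaced : Prop := ∀ α ∈ S.R, ∀ β ∈ S.R, ⟪α, α⟫ = ⟪β, β⟫

/-- `ω` is the fundamental weight `ω_r` dual to the simple root `a r`:
`⟨ω, a j⟩ = δ_{rj}` for `1 ≤ j ≤ n`. -/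
def IsFundamental (r : ℕ) (ω : V) : Prop :=
  ∀ j ∈ Finset.Icc 1 n, 2 * ⟪ω, S.a j⟫ / ⟪S.a j, S.a j⟫ = if j = r then 1 else 0

/-- A weight `ω` is minuscule: `⟨ω, β⟩ ≤ 1` for every positive root `β`. -/
def Minuscule (ω : V) : Prop := ∀ β, S.IsPos β → 2 * ⟪ω, β⟫ / ⟪β, β⟫ ≤ 1

end RootSystemWithBase

variable {V}

/-- Adjacency in the Dynkin diagram of type `E_n` (`n = 6, 7, 8`, Bourbaki labeling):
`α_2` is the branch node attached to `α_4`; `α_1, α_3, α_4, …, α_n` form a chain. -/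
def adjE (i j : ℕ) : Prop :=
  (i, j) ∈ ([(1,3),(3,4),(2,4),(4,5),(5,6),(6,7),(7,8)] : List (ℕ × ℕ)) ∨
  (j, i) ∈ ([(1,3),(3,4),(2,4),(4,5),(5,6),(6,7),(7,8)] : List (ℕ × ℕ))

/-- The element `v_4 = s_1 s_3 s_4 s_5 s_2 s_4 s_3 s_6 s_5 s_4 s_1 s_2 s_3 s_7 s_6 s_5 s_4`
of the Weyl group of `E_7`. -/
def v4E7 (S : RootSystemWithBase V 7) : V ≃ₗᵢ[ℝ] V :=
  S.prodW [1, 3, 4, 5, 2, 4, 3, 6, 5, 4, 1, 2, 3, 7, 6, 5, 4]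

/- ===== auxiliary development ===== -/
section Aux

set_option linter.unusedSectionVars false

lemma sref_apply (v x : V) : sref V v x = x - (2 * ⟪x, v⟫ / ⟪v, v⟫) • v := by
  unfold sref
  rw [Submodule.reflection_orthogonal_apply, Submodule.reflection_singleton_apply]
  rw [real_inner_comm v x, real_inner_self_eq_norm_sq]
  rw [two_smul, ← add_smul, neg_sub]
  congr 2
  simp only [RCLike.ofReal_real_eq_id, id]
  ring

lemma sref_mul_self (v : V) : sref V v * sref V v = 1 := Submodule.reflection_mul_reflection _

lemma inner_self_pos' {x : V} (hx : x ≠ 0) : (0 : ℝ) < ⟪x, x⟫ :=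
  lt_of_le_of_ne real_inner_self_nonneg (fun h => hx (inner_self_eq_zero.mp h.symm))

lemma mul_apply' (w u : V ≃ₗᵢ[ℝ] V) (x : V) : (w * u) x = w (u x) := rfl

lemma one_apply' (x : V) : (1 : V ≃ₗᵢ[ℝ] V) x = x := rfl

lemma inv_apply' (g : V ≃ₗᵢ[ℝ] V) (x : V) : (g⁻¹ : V ≃ₗᵢ[ℝ] V) x = g.symm x := rfl

lemma sref_conj (g : V ≃ₗᵢ[ℝ] V) (v : V) : sref V (g v) = g * sref V v * g⁻¹ := by
  ext x
  simp only [mul_apply', sref_apply, map_sub, map_smul, inv_apply', g.apply_symm_apply]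
  have h3 : ⟪x, g v⟫ = ⟪g.symm x, v⟫ := by
    rw [← g.inner_map_map (g.symm x) v, g.apply_symm_apply]
  have h4 : ⟪g v, g v⟫ = ⟪v, v⟫ := g.inner_map_map v v
  rw [h3, h4]

namespace RootSystemWithBase

variable {n : ℕ} (S : RootSystemWithBase V n)

lemma s_apply (i : ℕ) (x : V) : S.s i x = x - (2 * ⟪x, S.a i⟫ / ⟪S.a i, S.a i⟫) • S.a i :=
  sref_apply _ _

lemma s_mul_self (i : ℕ) : S.s i * S.s i = 1 := sref_mul_self _

lemma s_inv (i : ℕ) : (S.s i)⁻¹ = S.s i := by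
  rw [inv_eq_iff_mul_eq_one, s_mul_self]

lemma s_s (i : ℕ) (x : V) : S.s i (S.s i x) = x := by
  rw [← mul_apply', s_mul_self, one_apply']

lemma s_self (i : ℕ) (h : S.a i ≠ 0) : S.s i (S.a i) = - S.a i := by
  rw [s_apply]
  have h2 : ⟪S.a i, S.a i⟫ ≠ 0 := by
    intro hc
    exact h (inner_self_eq_zero.mp hc)
  rw [mul_div_assoc, div_self h2, mul_one, two_smul]
  abel

lemma prodW_nil : S.prodW [] = 1 := rfl

lemma prodW_cons (i : ℕ) (l : List ℕ) : S.prodW (i :: l) = S.s i * S.prodW l := by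
  simp [prodW]

lemma prodW_append (l₁ l₂ : List ℕ) : S.prodW (l₁ ++ l₂) = S.prodW l₁ * S.prodW l₂ := by
  simp [prodW]

lemma prodW_apply_append (l₁ l₂ : List ℕ) (x : V) :
    S.prodW (l₁ ++ l₂) x = S.prodW l₁ (S.prodW l₂ x) := by
  rw [prodW_append, mul_apply']

lemma prodW_inv (l : List ℕ) : (S.prodW l)⁻¹ = S.prodW l.reverse := by
  induction l with
  | nil => simp [prodW]
  | cons i l ih =>
      rw [prodW_cons, mul_inv_rev, ih, List.reverse_cons, prodW_append, s_inv]
      simp [prodW]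

lemma prodW_mem (J : Set ℕ) (l : List ℕ) (h : ∀ i ∈ l, i ∈ J ∩ Set.Icc 1 n) :
    S.prodW l ∈ S.WJ J := by
  induction l with
  | nil => exact one_mem _
  | cons i l ih =>
      rw [prodW_cons]
      exact mul_mem (Subgroup.subset_closure ⟨i, h i (by simp), rfl⟩)
        (ih fun j hj => h j (by simp [hj]))

lemma s_mem (J : Set ℕ) {i : ℕ} (h : i ∈ J ∩ Set.Icc 1 n) : S.s i ∈ S.WJ J :=
  Subgroup.subset_closure ⟨i, h, rfl⟩

lemma exists_word (J : Set ℕ) (w : V ≃ₗᵢ[ℝ] V) (hw : w ∈ S.WJ J) :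
    ∃ l : List ℕ, (∀ i ∈ l, i ∈ J ∩ Set.Icc 1 n) ∧ w = S.prodW l := by
  induction hw using Subgroup.closure_induction with
  | mem x hx =>
      obtain ⟨i, hi, rfl⟩ := hx
      exact ⟨[i], by simpa using hi, by simp [prodW]⟩
  | one => exact ⟨[], by simp, rfl⟩
  | mul x y _ _ hx hy =>
      obtain ⟨l₁, h₁, rfl⟩ := hx
      obtain ⟨l₂, h₂, rfl⟩ := hy
      exact ⟨l₁ ++ l₂, by
        intro i hi
        rcases List.mem_append.mp hi with h | h
        exacts [h₁ i h, h₂ i h], (S.prodW_append l₁ l₂).symm⟩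
  | inv x _ hx =>
      obtain ⟨l, h, rfl⟩ := hx
      exact ⟨l.reverse, fun i hi => h i (List.mem_reverse.mp hi), S.prodW_inv l⟩

lemma lenJ_le (J : Set ℕ) (w : V ≃ₗᵢ[ℝ] V) (l : List ℕ)
    (h : ∀ i ∈ l, i ∈ J ∩ Set.Icc 1 n) (hw : w = S.prodW l) :
    S.lenJ J w ≤ l.length :=
  Nat.sInf_le ⟨l, h, rfl, hw⟩

lemma exists_reduced (J : Set ℕ) (w : V ≃ₗᵢ[ℝ] V) (hw : w ∈ S.WJ J) :
    ∃ l : List ℕ, (∀ i ∈ l, i ∈ J ∩ Set.Icc 1 n) ∧ w = S.prodW l ∧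
      l.length = S.lenJ J w := by
  obtain ⟨l₀, h₀, rfl⟩ := S.exists_word J w hw
  have hne : {k | ∃ l : List ℕ, (∀ i ∈ l, i ∈ J ∩ Set.Icc 1 n) ∧ l.length = k ∧
      S.prodW l₀ = S.prodW l}.Nonempty := ⟨l₀.length, l₀, h₀, rfl, rfl⟩
  obtain ⟨l, hl, hlen, hwl⟩ := Nat.sInf_mem hne
  exact ⟨l, hl, hwl, hlen⟩

lemma prodW_root (l : List ℕ) (h : ∀ i ∈ l, i ∈ Finset.Icc 1 n) {β : V} (hβ : β ∈ S.R) :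
    S.prodW l β ∈ S.R := by
  induction l with
  | nil => exact hβ
  | cons i l ih =>
      rw [prodW_cons, mul_apply']
      exact S.refl_mem _ (S.simple_mem i (h i (by simp))) _ (ih fun j hj => h j (by simp [hj]))


/- ===== positivity theory ===== -/

lemma coeff_unique {c d : ℕ → ℝ}
    (h : ∑ i ∈ Finset.Icc 1 n, c i • S.a i = ∑ i ∈ Finset.Icc 1 n, d i • S.a i) :
    ∀ i ∈ Finset.Icc 1 n, c i = d i := by
  have indep2 : LinearIndependent ℝ (fun i : {x // x ∈ Finset.Icc 1 n} => S.a i) := by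
    have := S.indep.comp
      (fun i : {x // x ∈ Finset.Icc 1 n} =>
        (⟨i.1, by simpa [Set.mem_Icc] using Finset.mem_Icc.mp i.2⟩ : (Set.Icc 1 n : Set ℕ)))
      (fun x y hxy => by
        apply Subtype.ext
        have h2 := congrArg Subtype.val hxy
        simpa using h2)
    exact this
  have h0 : ∑ i ∈ Finset.Icc 1 n, (c i - d i) • S.a i = 0 := by
    simp only [sub_smul, Finset.sum_sub_distrib, h, sub_self]
  have h1 : ∑ i : {x // x ∈ Finset.Icc 1 n}, (c i.1 - d i.1) • S.a i.1 = 0 := by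
    rw [Finset.sum_coe_sort (Finset.Icc 1 n) (fun i => (c i - d i) • S.a i)]
    exact h0
  have h2 := linearIndependent_iff'.mp indep2 Finset.univ
    (fun i => c i.1 - d i.1) h1
  intro i hi
  have := h2 ⟨i, hi⟩ (Finset.mem_univ _)
  simp only at this
  linarith

lemma sum_ite_point (t : ℝ) {i : ℕ} (hi : i ∈ Finset.Icc 1 n) :
    ∑ m ∈ Finset.Icc 1 n, (if m = i then t else 0) • S.a m = t • S.a i := by
  have h : ∀ m ∈ Finset.Icc 1 n, (if m = i then t else 0) • S.a m
      = if m = i then t • S.a m else 0 := by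
    intro m _; by_cases h : m = i <;> simp [h]
  rw [Finset.sum_congr rfl h, Finset.sum_ite_eq' (Finset.Icc 1 n) i (fun m => t • S.a m),
    if_pos hi]

lemma isPos_simple {i : ℕ} (hi : i ∈ Finset.Icc 1 n) : S.IsPos (S.a i) := by
  refine ⟨S.simple_mem i hi, fun m => if m = i then 1 else 0, fun m => by positivity, ?_⟩
  rw [S.sum_ite_point 1 hi, one_smul]

lemma not_pos_and_neg {β : V} (h1 : S.IsPos β) (h2 : S.IsNeg β) : False := by
  obtain ⟨hβR, c, hc0, hc⟩ := h1
  obtain ⟨_, d, hd0, hd⟩ := h2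
  have hβ2 : β = ∑ i ∈ Finset.Icc 1 n, (-(d i)) • S.a i := by
    rw [← neg_neg β, hd, ← Finset.sum_neg_distrib]
    exact Finset.sum_congr rfl (fun i _ => (neg_smul _ _).symm)
  have key := S.coeff_unique (hc.symm.trans hβ2)
  have hβ0 : β = 0 := by
    rw [hc]
    apply Finset.sum_eq_zero
    intro i hi
    have h3 := key i hi
    have h4 := hc0 i
    have h5 := hd0 i
    have : c i = 0 := by linarith
    simp [this]
  exact S.ne_zero β hβR hβ0

lemma neg_mem_R {β : V} (hβ : β ∈ S.R) : -β ∈ S.R := by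
  have h := S.refl_mem β hβ β hβ
  rw [sref_apply] at h
  have hne : ⟪β, β⟫ ≠ 0 := fun hc0 => S.ne_zero β hβ (inner_self_eq_zero.mp hc0)
  rw [mul_div_assoc, div_self hne, mul_one, two_smul] at h
  have he : β - (β + β) = -β := by abel
  rwa [he] at h

lemma pos_or_neg {β : V} (hβ : β ∈ S.R) : S.IsPos β ∨ S.IsNeg β := by
  obtain ⟨c, hsign, hc⟩ := S.root_combo β hβ
  rcases hsign with hpos | hneg
  · exact Or.inl ⟨hβ, fun i => (c i : ℝ), fun i => by
      show (0 : ℝ) ≤ ((c i : ℤ) : ℝ)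
      exact_mod_cast hpos i, hc⟩
  · refine Or.inr ⟨S.neg_mem_R hβ, fun i => -((c i : ℤ) : ℝ), fun i => by
      show (0 : ℝ) ≤ -((c i : ℤ) : ℝ)
      exact neg_nonneg.mpr (by exact_mod_cast hneg i), ?_⟩
    rw [hc, ← Finset.sum_neg_distrib]
    exact Finset.sum_congr rfl fun i _ => (neg_smul _ _).symm

lemma eq_simple_of_pos_refl_neg {i : ℕ} {β : V} (hi : i ∈ Finset.Icc 1 n)
    (hpos : S.IsPos β) (hneg : S.IsNeg (S.s i β)) : β = S.a i := by
  obtain ⟨hβR, c, hc0, hc⟩ := hpos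
  obtain ⟨_, d, hd0, hd⟩ := hneg
  set t : ℝ := 2 * ⟪β, S.a i⟫ / ⟪S.a i, S.a i⟫ with ht
  have hs : S.s i β = β - t • S.a i := S.s_apply i β
  have hβ2 : β = ∑ m ∈ Finset.Icc 1 n, (-(d m) + if m = i then t else 0) • S.a m := by
    have hsplit : ∑ m ∈ Finset.Icc 1 n, (-(d m) + if m = i then t else 0) • S.a m
        = (∑ m ∈ Finset.Icc 1 n, (-(d m)) • S.a m)
          + ∑ m ∈ Finset.Icc 1 n, (if m = i then t else 0) • S.a m := by
      rw [← Finset.sum_add_distrib]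
      exact Finset.sum_congr rfl fun m _ => add_smul _ _ _
    have h1 : β = -(∑ m ∈ Finset.Icc 1 n, d m • S.a m) + t • S.a i := by
      rw [← hd, hs]; abel
    rw [h1, hsplit, S.sum_ite_point t hi, ← Finset.sum_neg_distrib]
    congr 1
    exact Finset.sum_congr rfl fun m _ => (neg_smul _ _).symm
  have key := S.coeff_unique (hc.symm.trans hβ2)
  have hβi : β = c i • S.a i := by
    rw [hc]
    apply Finset.sum_eq_single_of_mem i hi
    intro b hb hbi
    have h1 := key b hb
    rw [if_neg hbi] at h1
    have h4 := hc0 b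
    have h5 := hd0 b
    have : c b = 0 := by linarith
    simp [this]
  rcases S.reduced (S.a i) (S.simple_mem i hi) (c i) (hβi ▸ hβR) with h1 | h1
  · rw [hβi, h1, one_smul]
  · exfalso; have := hc0 i; rw [h1] at this; linarith

lemma exchange (J : Set ℕ) (l : List ℕ) :
    (∀ i ∈ l, i ∈ J ∩ Set.Icc 1 n) → ∀ j, j ∈ J ∩ Set.Icc 1 n →
      S.IsNeg (S.prodW l (S.a j)) →
      ∃ l', (∀ i ∈ l', i ∈ J ∩ Set.Icc 1 n) ∧ l'.length + 1 = l.length ∧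
        S.prodW l * S.s j = S.prodW l' := by
  induction l with
  | nil =>
      intro _ j hj hneg
      exfalso
      have hjI : j ∈ Finset.Icc 1 n := by
        simpa [Finset.mem_Icc, Set.mem_Icc] using hj.2
      exact S.not_pos_and_neg (S.isPos_simple hjI)
        (by simpa [prodW_nil, one_apply'] using hneg)
  | cons i l ih =>
      intro hl j hj hneg
      have hlsub : ∀ m ∈ l, m ∈ J ∩ Set.Icc 1 n := fun m hm => hl m (by simp [hm])
      have hiJ : i ∈ J ∩ Set.Icc 1 n := hl i (by simp)
      have hiI : i ∈ Finset.Icc 1 n := by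
        simpa [Finset.mem_Icc, Set.mem_Icc] using hiJ.2
      have hjI : j ∈ Finset.Icc 1 n := by
        simpa [Finset.mem_Icc, Set.mem_Icc] using hj.2
      have hβR : S.prodW l (S.a j) ∈ S.R :=
        S.prodW_root l (fun m hm => by
          simpa [Finset.mem_Icc, Set.mem_Icc] using (hlsub m hm).2) (S.simple_mem j hjI)
      rcases S.pos_or_neg hβR with hp | hn
      · have hsneg : S.IsNeg (S.s i (S.prodW l (S.a j))) := by
          have h1 : S.prodW (i :: l) (S.a j) = S.s i (S.prodW l (S.a j)) := by
            rw [prodW_cons, mul_apply']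
          rwa [h1] at hneg
        have hβai : S.prodW l (S.a j) = S.a i := S.eq_simple_of_pos_refl_neg hiI hp hsneg
        refine ⟨l, hlsub, by simp, ?_⟩
        have hconj : S.s i = S.prodW l * S.s j * (S.prodW l)⁻¹ := by
          have h1 : S.s i = sref V (S.prodW l (S.a j)) := by rw [hβai]; rfl
          rw [h1, sref_conj]
          rfl
        rw [prodW_cons, hconj]
        simp only [mul_assoc, inv_mul_cancel_left, S.s_mul_self, mul_one]
      · obtain ⟨l₂, hl₂, hlen₂, heq₂⟩ := ih hlsub j hj hn
        refine ⟨i :: l₂, ?_, by simp [← hlen₂], ?_⟩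
        · intro m hm; rcases List.mem_cons.mp hm with rfl | hm
          exacts [hiJ, hl₂ m hm]
        · rw [prodW_cons, mul_assoc, heq₂, prodW_cons]

lemma longest_descent {J : Set ℕ} {w : V ≃ₗᵢ[ℝ] V} (hw : S.IsLongest J w)
    {j : ℕ} (hj : j ∈ J ∩ Set.Icc 1 n) : S.IsNeg (w (S.a j)) := by
  have hjI : j ∈ Finset.Icc 1 n := by
    simpa [Finset.mem_Icc, Set.mem_Icc] using hj.2
  obtain ⟨lw, hlw, hwl⟩ := S.exists_word J w hw.1
  have hwR : w (S.a j) ∈ S.R := by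
    rw [hwl]
    exact S.prodW_root lw (fun m hm => by
      simpa [Finset.mem_Icc, Set.mem_Icc] using (hlw m hm).2) (S.simple_mem j hjI)
  rcases S.pos_or_neg hwR with hp | hn
  · exfalso
    have hwsj : w * S.s j ∈ S.WJ J := mul_mem hw.1 (S.s_mem J hj)
    obtain ⟨l, hl, hle, hlen⟩ := S.exists_reduced J (w * S.s j) hwsj
    have hneg : S.IsNeg (S.prodW l (S.a j)) := by
      rw [← hle, mul_apply', S.s_self j (S.ne_zero _ (S.simple_mem j hjI)), map_neg]
      show S.IsPos (-(-(w (S.a j))))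
      rwa [neg_neg]
    obtain ⟨l', hl', hlen', heq'⟩ := S.exchange J l hl j hj hneg
    have hww : w = S.prodW l' := by
      rw [← heq', ← hle, mul_assoc, s_mul_self, mul_one]
    have h1 : S.lenJ J w ≤ l'.length := S.lenJ_le J w l' hl' hww
    have h2 := hw.2 (w * S.s j) hwsj
    omega
  · exact hn

lemma eq_one_of_no_descent {J : Set ℕ} {u : V ≃ₗᵢ[ℝ] V} (hu : u ∈ S.WJ J)
    (h : ∀ j ∈ J ∩ Set.Icc 1 n, S.IsPos (u (S.a j))) : u = 1 := by
  obtain ⟨l, hl, hul, hlen⟩ := S.exists_reduced J u hu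
  rcases List.eq_nil_or_concat l with rfl | ⟨l', j, rfl⟩
  · rw [hul]; rfl
  · exfalso
    simp only [List.concat_eq_append] at hul hl hlen
    have hjJ : j ∈ J ∩ Set.Icc 1 n := hl j (by simp)
    have hjI : j ∈ Finset.Icc 1 n := by
      simpa [Finset.mem_Icc, Set.mem_Icc] using hjJ.2
    have hl' : ∀ m ∈ l', m ∈ J ∩ Set.Icc 1 n := fun m hm => hl m (by simp [hm])
    have hsj : S.prodW [j] = S.s j := by simp [prodW]
    have h1 : u * S.s j = S.prodW l' := by
      rw [hul, prodW_append, hsj, mul_assoc, s_mul_self, mul_one]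
    have hneg : S.IsNeg (S.prodW l' (S.a j)) := by
      rw [← h1, mul_apply', S.s_self j (S.ne_zero _ (S.simple_mem j hjI)), map_neg]
      show S.IsPos (-(-(u (S.a j))))
      rw [neg_neg]
      exact h j hjJ
    obtain ⟨l₂, hl₂, hlen₂, heq₂⟩ := S.exchange J l' hl' j hjJ hneg
    have hu2 : u = S.prodW l₂ := by
      rw [hul, prodW_append, hsj, ← heq₂]
    have h3 := S.lenJ_le J u l₂ hl₂ hu2
    have hll : (l' ++ [j]).length = l'.length + 1 := by simp
    omega

lemma neg_image_of_support (T : Set ℕ) (hT : ∀ m ∈ T, m ∈ Finset.Icc 1 n)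
    (g : V ≃ₗᵢ[ℝ] V) (hgR : ∀ β ∈ S.R, g β ∈ S.R)
    (hbase : ∀ j ∈ T, S.IsNeg (g (S.a j))) :
    ∀ N : ℕ, ∀ γ, γ ∈ S.R → ∀ c : ℕ → ℤ, (∀ i, 0 ≤ c i) → (∀ i, i ∉ T → c i = 0) →
      γ = ∑ i ∈ Finset.Icc 1 n, ((c i : ℤ) : ℝ) • S.a i →
      (∑ i ∈ Finset.Icc 1 n, c i).toNat = N → S.IsNeg (g γ) := by
  intro N
  induction N using Nat.strong_induction_on with
  | _ N ih =>
  intro γ hγ c hc0 hsupp hrep hN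
  have hip : ⟪γ, γ⟫ = ∑ i ∈ Finset.Icc 1 n, ((c i : ℤ) : ℝ) * ⟪S.a i, γ⟫ := by
    nth_rewrite 1 [hrep]
    rw [sum_inner]
    exact Finset.sum_congr rfl fun i _ => real_inner_smul_left _ _ _
  have hγpos : (0 : ℝ) < ⟪γ, γ⟫ := inner_self_pos' (S.ne_zero γ hγ)
  have hex : ∃ i ∈ Finset.Icc 1 n, 0 < c i ∧ 0 < ⟪γ, S.a i⟫ := by
    by_contra hcon
    push_neg at hcon
    have hle : ⟪γ, γ⟫ ≤ 0 := by
      rw [hip]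
      apply Finset.sum_nonpos
      intro i hi
      rcases lt_or_eq_of_le (hc0 i) with hci | hci
      · have h2 := hcon i hi hci
        rw [real_inner_comm]
        apply mul_nonpos_of_nonneg_of_nonpos
        · positivity
        · exact h2
      · rw [← hci]; simp
    linarith
  obtain ⟨i, hi, hci, hinner⟩ := hex
  have hiT : i ∈ T := by
    by_contra hiT
    rw [hsupp i hiT] at hci
    exact lt_irrefl 0 hci
  obtain ⟨k, hk⟩ := S.crystallographic (S.a i) (S.simple_mem i hi) γ hγ
  have hai0 : S.a i ≠ 0 := S.ne_zero _ (S.simple_mem i hi)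
  have haipos : (0 : ℝ) < ⟪S.a i, S.a i⟫ := inner_self_pos' hai0
  have hkpos : (0 : ℝ) < (k : ℝ) := by
    rw [← hk]
    exact div_pos (by linarith) haipos
  have hk1 : 1 ≤ k := by exact_mod_cast hkpos
  have hδdef : S.s i γ = γ - ((k : ℤ) : ℝ) • S.a i := by
    rw [s_apply, hk]
  have hδR : S.s i γ ∈ S.R := S.refl_mem _ (S.simple_mem i hi) _ hγ
  set c' : ℕ → ℤ := fun m => c m - if m = i then k else 0 with hc'
  have hrep' : S.s i γ = ∑ m ∈ Finset.Icc 1 n, ((c' m : ℤ) : ℝ) • S.a m := by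
    have hsplit : ∑ m ∈ Finset.Icc 1 n, ((c' m : ℤ) : ℝ) • S.a m
        = (∑ m ∈ Finset.Icc 1 n, ((c m : ℤ) : ℝ) • S.a m)
          - ∑ m ∈ Finset.Icc 1 n, (if m = i then ((k : ℤ) : ℝ) else 0) • S.a m := by
      rw [← Finset.sum_sub_distrib]
      apply Finset.sum_congr rfl
      intro m _
      rw [← sub_smul]
      congr 1
      by_cases hmi : m = i <;> simp [hc', hmi]
    rw [hδdef, hsplit, S.sum_ite_point _ hi, hrep]
  rcases S.pos_or_neg hδR with hp | hn
  · -- positive case: induction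
    obtain ⟨_, d, hd0, hd⟩ := hp
    have key := S.coeff_unique (hrep'.symm.trans hd)
    have hc'0 : ∀ m, 0 ≤ c' m := by
      intro m
      by_cases hm : m ∈ Finset.Icc 1 n
      · have h1 := key m hm
        have h2 := hd0 m
        rw [← h1] at h2
        exact_mod_cast h2
      · have : m ≠ i := fun hc => hm (hc ▸ hi)
        simp [hc', this, hc0 m]
    have hsupp' : ∀ m, m ∉ T → c' m = 0 := by
      intro m hm
      have : m ≠ i := fun hc => hm (hc ▸ hiT)
      simp [hc', this, hsupp m hm]
    have hsum' : ∑ m ∈ Finset.Icc 1 n, c' m = (∑ m ∈ Finset.Icc 1 n, c m) - k := by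
      simp only [hc', Finset.sum_sub_distrib]
      congr 1
      rw [Finset.sum_ite_eq' (Finset.Icc 1 n) i (fun _ => k), if_pos hi]
    have hnn : 0 ≤ ∑ m ∈ Finset.Icc 1 n, c' m :=
      Finset.sum_nonneg fun m _ => hc'0 m
    have hnn2 : 0 ≤ ∑ m ∈ Finset.Icc 1 n, c m :=
      Finset.sum_nonneg fun m _ => hc0 m
    have hlt : (∑ m ∈ Finset.Icc 1 n, c' m).toNat < N := by omega
    have hgδ := ih _ hlt (S.s i γ) hδR c' hc'0 hsupp' hrep' rfl
    -- γ = s i γ + k • a i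
    have hγeq : γ = S.s i γ + ((k : ℤ) : ℝ) • S.a i := by rw [hδdef]; abel
    obtain ⟨p, hp0, hpe⟩ := hgδ.2
    obtain ⟨q, hq0, hqe⟩ := (hbase i hiT).2
    refine ⟨S.neg_mem_R (hgR γ hγ), fun m => p m + (k : ℝ) * q m, fun m => by
      have := hp0 m; have := hq0 m; positivity, ?_⟩
    have hgγ : g γ = g (S.s i γ) + ((k : ℤ) : ℝ) • g (S.a i) := by
      conv_lhs => rw [hγeq]
      rw [map_add, map_smul]
    have hkey : -(g γ) = (∑ m ∈ Finset.Icc 1 n, p m • S.a m)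
        + (k : ℝ) • ∑ m ∈ Finset.Icc 1 n, q m • S.a m := by
      rw [← hpe, ← hqe, hgγ, smul_neg]
      push_cast
      abel
    rw [hkey, Finset.smul_sum, ← Finset.sum_add_distrib]
    exact Finset.sum_congr rfl fun m _ => by rw [smul_smul, ← add_smul]
  · -- negative case: γ = a i
    obtain ⟨_, d, hd0, hd⟩ := hn
    have hrepneg : -(S.s i γ) = ∑ m ∈ Finset.Icc 1 n, (-((c' m : ℤ) : ℝ)) • S.a m := by
      rw [hrep', ← Finset.sum_neg_distrib]
      exact Finset.sum_congr rfl fun m _ => (neg_smul _ _).symm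
    have key := S.coeff_unique (hrepneg.symm.trans hd)
    have hzero : ∀ m ∈ Finset.Icc 1 n, m ≠ i → c m = 0 := by
      intro m hm hmi
      have h1 := key m hm
      have h2 := hd0 m
      simp only [hc', if_neg hmi, sub_zero] at h1
      have h3 : ((c m : ℤ) : ℝ) ≤ 0 := by linarith
      have h4 := hc0 m
      exact le_antisymm (by exact_mod_cast h3) h4
    have hγi : γ = ((c i : ℤ) : ℝ) • S.a i := by
      rw [hrep]
      apply Finset.sum_eq_single_of_mem i hi
      intro b hb hbi
      rw [hzero b hb hbi]
      simp
    rcases S.reduced (S.a i) (S.simple_mem i hi) _ (hγi ▸ hγ) with h1 | h1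
    · have : γ = S.a i := by rw [hγi, h1, one_smul]
      rw [this]
      exact hbase i hiT
    · exfalso
      have h2 := hc0 i
      have h3 : ((c i : ℤ) : ℝ) < 0 := by rw [h1]; norm_num
      have h4 : (c i : ℤ) < 0 := by exact_mod_cast h3
      omega

end RootSystemWithBase

/- ===== E7 computational machinery ===== -/

def cartE7 (i j : ℕ) : ℤ :=
  if i = j then 2
  else if (i, j) ∈ [(1,3),(3,4),(2,4),(4,5),(5,6),(6,7)] ∨
      (j, i) ∈ [(1,3),(3,4),(2,4),(4,5),(5,6),(6,7)] then -1
  else 0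

def dotF (c : ℕ → ℤ) (j : ℕ) : ℤ :=
  c 1 * cartE7 1 j + c 2 * cartE7 2 j + c 3 * cartE7 3 j + c 4 * cartE7 4 j
    + c 5 * cartE7 5 j + c 6 * cartE7 6 j + c 7 * cartE7 7 j

def reflF (j : ℕ) (c : ℕ → ℤ) : ℕ → ℤ := fun m => c m - if m = j then dotF c j else 0

def applyF (l : List ℕ) (c : ℕ → ℤ) : ℕ → ℤ := l.foldr reflF c

def getZ (L : List ℤ) (m : ℕ) : ℤ := L.getD m 0

def reflL (j : ℕ) (L : List ℤ) : List ℤ := L.set j (getZ L j - dotF (getZ L) j)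

def applyL (l : List ℕ) (L : List ℤ) : List ℤ := l.foldr reflL L

def eL (j : ℕ) : List ℤ :=
  [if 0 = j then 1 else 0, if 1 = j then 1 else 0, if 2 = j then 1 else 0,
   if 3 = j then 1 else 0, if 4 = j then 1 else 0, if 5 = j then 1 else 0,
   if 6 = j then 1 else 0, if 7 = j then 1 else 0]

lemma eL_length (j : ℕ) : (eL j).length = 8 := rfl

lemma eL_eval {j : ℕ} (hj : j ∈ Finset.Icc 1 7) (m : ℕ) :
    getZ (eL j) m = if m = j then 1 else 0 := by
  have hj7 : j ≤ 7 := (Finset.mem_Icc.mp hj).2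
  by_cases hm : m < 8
  · interval_cases m <;> rfl
  · push_neg at hm
    show (eL j).getD m 0 = _
    rw [List.getD_eq_default _ _ (by rw [eL_length]; omega), if_neg (by omega)]

lemma getZ_reflL {j : ℕ} (hj : j < 8) {L : List ℤ} (hL : L.length = 8) (m : ℕ) :
    getZ (reflL j L) m = reflF j (getZ L) m := by
  unfold reflL reflF getZ
  by_cases hmj : m = j
  · subst hmj
    rw [if_pos rfl]
    rw [List.getD_eq_getElem _ _ (by rw [List.length_set]; omega), List.getElem_set_self]
  · rw [if_neg hmj, sub_zero]
    by_cases h8 : m < L.length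
    · rw [List.getD_eq_getElem _ _ (by rw [List.length_set]; exact h8),
        List.getElem_set_ne (fun h => hmj h.symm),
        List.getD_eq_getElem _ _ h8]
    · rw [List.getD_eq_default _ _ (by rw [List.length_set]; omega),
        List.getD_eq_default _ _ (by omega)]

lemma applyL_length (l : List ℕ) (L : List ℤ) : (applyL l L).length = L.length := by
  induction l with
  | nil => rfl
  | cons i l ih =>
      show (reflL i (applyL l L)).length = _
      unfold reflL
      rw [List.length_set]
      exact ih

lemma reflF_congr (j : ℕ) (c d : ℕ → ℤ) (h : ∀ m, c m = d m) (m : ℕ) :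
    reflF j c m = reflF j d m := by
  unfold reflF dotF
  rw [h m, h 1, h 2, h 3, h 4, h 5, h 6, h 7]

lemma applyF_congr (l : List ℕ) (c d : ℕ → ℤ) (h : ∀ m, c m = d m) :
    ∀ m, applyF l c m = applyF l d m := by
  induction l with
  | nil => exact h
  | cons i l ih => exact fun m => reflF_congr i _ _ ih m

lemma getZ_applyL (l : List ℕ) (hl : ∀ i ∈ l, i ∈ Finset.Icc 1 7)
    (L : List ℤ) (hL : L.length = 8) : ∀ m, getZ (applyL l L) m = applyF l (getZ L) m := by
  induction l with
  | nil => intro m; rfl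
  | cons i l ih =>
      intro m
      have hi : i < 8 := by
        have := (Finset.mem_Icc.mp (hl i (by simp))).2; omega
      have hlen : (applyL l L).length = 8 := by rw [applyL_length]; exact hL
      show getZ (reflL i (applyL l L)) m = reflF i (applyF l (getZ L)) m
      rw [getZ_reflL hi hlen m]
      exact reflF_congr i _ _ (ih (fun p hp => hl p (by simp [hp]))) m

lemma applyF_ne (l : List ℕ) (T : Set ℕ) (hl : ∀ i ∈ l, i ∈ T) {m : ℕ} (hm : m ∉ T)
    (c : ℕ → ℤ) : applyF l c m = c m := by
  induction l with
  | nil => rfl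
  | cons i l ih =>
      have hi : i ∈ T := hl i (by simp)
      have hmi : m ≠ i := fun h => hm (h ▸ hi)
      show reflF i (applyF l c) m = c m
      unfold reflF
      rw [if_neg hmi, sub_zero]
      exact ih (fun p hp => hl p (by simp [hp]))

namespace RootSystemWithBase

variable (S : RootSystemWithBase V 7)

def combo (c : ℕ → ℤ) : V := ∑ i ∈ Finset.Icc 1 7, ((c i : ℤ) : ℝ) • S.a i

lemma combo_congr {c d : ℕ → ℤ} (h : ∀ m ∈ Finset.Icc 1 7, c m = d m) :
    S.combo c = S.combo d :=
  Finset.sum_congr rfl (fun m hm => by rw [h m hm])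

lemma sum_Icc17 {M : Type*} [AddCommMonoid M] (f : ℕ → M) :
    ∑ i ∈ Finset.Icc 1 7, f i = f 1 + f 2 + f 3 + f 4 + f 5 + f 6 + f 7 := by
  rw [show (Finset.Icc 1 7 : Finset ℕ) = {1, 2, 3, 4, 5, 6, 7} from by
    ext x; simp [Finset.mem_Icc, Finset.mem_insert]; omega]
  rw [Finset.sum_insert (by decide), Finset.sum_insert (by decide),
    Finset.sum_insert (by decide), Finset.sum_insert (by decide),
    Finset.sum_insert (by decide), Finset.sum_insert (by decide),
    Finset.sum_singleton]
  abel

lemma combo_eval (c : ℕ → ℤ) :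
    S.combo c = ((c 1 : ℤ) : ℝ) • S.a 1 + ((c 2 : ℤ) : ℝ) • S.a 2 + ((c 3 : ℤ) : ℝ) • S.a 3
      + ((c 4 : ℤ) : ℝ) • S.a 4 + ((c 5 : ℤ) : ℝ) • S.a 5 + ((c 6 : ℤ) : ℝ) • S.a 6
      + ((c 7 : ℤ) : ℝ) • S.a 7 :=
  sum_Icc17 (fun i => ((c i : ℤ) : ℝ) • S.a i)

variable {S}

set_option maxHeartbeats 2000000 in
lemma inner_cart (hE : ∀ i ∈ Finset.Icc 1 7, ∀ j ∈ Finset.Icc 1 7,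
      ⟪S.a i, S.a j⟫ = if i = j then 2 else if adjE i j then -1 else 0)
    {i j : ℕ} (hi : i ∈ Finset.Icc 1 7) (hj : j ∈ Finset.Icc 1 7) :
    ⟪S.a i, S.a j⟫ = ((cartE7 i j : ℤ) : ℝ) := by
  rw [hE i hi j hj]
  rw [Finset.mem_Icc] at hi hj
  obtain ⟨hi1, hi7⟩ := hi
  obtain ⟨hj1, hj7⟩ := hj
  have hadj : adjE i j ↔ ((i, j) ∈ [(1,3),(3,4),(2,4),(4,5),(5,6),(6,7)] ∨
      (j, i) ∈ [(1,3),(3,4),(2,4),(4,5),(5,6),(6,7)]) := by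
    unfold adjE
    constructor
    · rintro (h | h)
      · left; simp only [List.mem_cons, List.mem_singleton, List.not_mem_nil] at h ⊢
        rcases h with h|h|h|h|h|h|h
        · exact Or.inl h
        · exact Or.inr (Or.inl h)
        · exact Or.inr (Or.inr (Or.inl h))
        · exact Or.inr (Or.inr (Or.inr (Or.inl h)))
        · exact Or.inr (Or.inr (Or.inr (Or.inr (Or.inl h))))
        · exact Or.inr (Or.inr (Or.inr (Or.inr (Or.inr (Or.inl h)))))
        · exfalso; simp at h; omega
      · right; simp only [List.mem_cons, List.mem_singleton, List.not_mem_nil] at h ⊢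
        rcases h with h|h|h|h|h|h|h
        · exact Or.inl h
        · exact Or.inr (Or.inl h)
        · exact Or.inr (Or.inr (Or.inl h))
        · exact Or.inr (Or.inr (Or.inr (Or.inl h)))
        · exact Or.inr (Or.inr (Or.inr (Or.inr (Or.inl h))))
        · exact Or.inr (Or.inr (Or.inr (Or.inr (Or.inr (Or.inl h)))))
        · exfalso; simp at h; omega
    · rintro (h | h)
      · left; simp only [List.mem_cons, List.mem_singleton] at h ⊢; tauto
      · right; simp only [List.mem_cons, List.mem_singleton] at h ⊢; tauto
  unfold cartE7
  by_cases hij : i = j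
  · rw [if_pos hij, if_pos hij]; norm_num
  · rw [if_neg hij, if_neg hij]
    by_cases hm : ((i, j) ∈ [(1,3),(3,4),(2,4),(4,5),(5,6),(6,7)] ∨
        (j, i) ∈ [(1,3),(3,4),(2,4),(4,5),(5,6),(6,7)])
    · rw [if_pos (hadj.mpr hm), if_pos hm]; norm_num
    · rw [if_neg (fun hc => hm (hadj.mp hc)), if_neg hm]; norm_num

lemma a_eq_combo {j : ℕ} (hj : j ∈ Finset.Icc 1 7) :
    S.a j = S.combo (fun m => if m = j then 1 else 0) := by
  unfold combo
  have h : ∀ m ∈ Finset.Icc 1 7,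
      (((if m = j then (1 : ℤ) else 0) : ℤ) : ℝ) • S.a m
        = (if m = j then (1 : ℝ) else 0) • S.a m := by
    intro m _; by_cases hm : m = j <;> simp [hm]
  rw [Finset.sum_congr rfl h, S.sum_ite_point 1 hj, one_smul]

lemma s_combo (hE : ∀ i ∈ Finset.Icc 1 7, ∀ j ∈ Finset.Icc 1 7,
      ⟪S.a i, S.a j⟫ = if i = j then 2 else if adjE i j then -1 else 0)
    {j : ℕ} (hj : j ∈ Finset.Icc 1 7) (c : ℕ → ℤ) :
    S.s j (S.combo c) = S.combo (reflF j c) := by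
  rw [S.s_apply]
  have hinner : ⟪S.combo c, S.a j⟫ = ((dotF c j : ℤ) : ℝ) := by
    unfold combo
    rw [sum_inner, Finset.sum_congr rfl (fun i hi => by
      rw [real_inner_smul_left, inner_cart hE hi hj]),
      sum_Icc17 (fun i => ((c i : ℤ) : ℝ) * ((cartE7 i j : ℤ) : ℝ))]
    unfold dotF
    push_cast
    ring
  have hcjj : cartE7 j j = 2 := by
    rw [Finset.mem_Icc] at hj
    obtain ⟨h1, h7⟩ := hj
    interval_cases j <;> rfl
  have hjj : ⟪S.a j, S.a j⟫ = 2 := by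
    rw [inner_cart hE hj hj, hcjj]; norm_num
  rw [hinner, hjj]
  have hcoef : 2 * ((dotF c j : ℤ) : ℝ) / 2 = ((dotF c j : ℤ) : ℝ) := by ring
  rw [hcoef]
  have hsplit : ∑ m ∈ Finset.Icc 1 7, ((reflF j c m : ℤ) : ℝ) • S.a m
      = (∑ m ∈ Finset.Icc 1 7, ((c m : ℤ) : ℝ) • S.a m)
        - ∑ m ∈ Finset.Icc 1 7, (if m = j then ((dotF c j : ℤ) : ℝ) else 0) • S.a m := by
    rw [← Finset.sum_sub_distrib]
    apply Finset.sum_congr rfl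
    intro m _
    rw [← sub_smul]
    congr 1
    unfold reflF
    by_cases hmj : m = j <;> simp [hmj]
  show S.combo c - _ • S.a j = S.combo (reflF j c)
  unfold combo
  rw [hsplit, S.sum_ite_point _ hj]

lemma prodW_comboF (hE : ∀ i ∈ Finset.Icc 1 7, ∀ j ∈ Finset.Icc 1 7,
      ⟪S.a i, S.a j⟫ = if i = j then 2 else if adjE i j then -1 else 0)
    (l : List ℕ) (hl : ∀ i ∈ l, i ∈ Finset.Icc 1 7) (c : ℕ → ℤ) :
    S.prodW l (S.combo c) = S.combo (applyF l c) := by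
  induction l with
  | nil => rw [S.prodW_nil, one_apply']; rfl
  | cons i l ih =>
      rw [S.prodW_cons, mul_apply', ih (fun p hp => hl p (by simp [hp])),
        s_combo hE (hl i (by simp))]
      rfl

lemma prodW_a_eq (hE : ∀ i ∈ Finset.Icc 1 7, ∀ j ∈ Finset.Icc 1 7,
      ⟪S.a i, S.a j⟫ = if i = j then 2 else if adjE i j then -1 else 0)
    (l : List ℕ) (hl : ∀ i ∈ l, i ∈ Finset.Icc 1 7) {j : ℕ} (hj : j ∈ Finset.Icc 1 7) :
    S.prodW l (S.a j) = S.combo (getZ (applyL l (eL j))) := by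
  rw [a_eq_combo hj, prodW_comboF hE l hl]
  apply S.combo_congr
  intro m _
  rw [getZ_applyL l hl (eL j) (eL_length j) m]
  exact (applyF_congr l _ _ (fun m' => eL_eval hj m') m).symm

lemma getZ_applyL_zero (l : List ℕ) (hl : ∀ i ∈ l, i ∈ Finset.Icc 1 7) {j : ℕ}
    (hj : j ∈ Finset.Icc 1 7) {m : ℕ} (hm : m ∉ Finset.Icc 1 7) :
    getZ (applyL l (eL j)) m = 0 := by
  rw [getZ_applyL l hl (eL j) (eL_length j) m,
    applyF_ne l {x | x ∈ Finset.Icc 1 7} (fun i hi => hl i hi) hm,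
    eL_eval hj m, if_neg (fun h => hm (by rw [h]; exact hj))]

lemma combo_neg_rep (c : ℕ → ℤ) :
    -(S.combo c) = ∑ i ∈ Finset.Icc 1 7, ((-(c i) : ℤ) : ℝ) • S.a i := by
  unfold combo
  rw [← Finset.sum_neg_distrib]
  apply Finset.sum_congr rfl
  intro m _
  push_cast
  rw [neg_smul]

lemma isNeg_combo (c : ℕ → ℤ) (hneg : ∀ m, c m ≤ 0) (hR : S.combo c ∈ S.R) :
    S.IsNeg (S.combo c) := by
  refine ⟨S.neg_mem_R hR, fun m => ((-(c m) : ℤ) : ℝ), fun m => by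
    show (0 : ℝ) ≤ ((-(c m) : ℤ) : ℝ)
    exact_mod_cast neg_nonneg.mpr (hneg m), combo_neg_rep c⟩

lemma isNeg_prodW (hE : ∀ i ∈ Finset.Icc 1 7, ∀ j ∈ Finset.Icc 1 7,
      ⟪S.a i, S.a j⟫ = if i = j then 2 else if adjE i j then -1 else 0)
    (l : List ℕ) (j : ℕ) (hl : ∀ i ∈ l, i ∈ Finset.Icc 1 7) (hj : j ∈ Finset.Icc 1 7)
    (hneg : ∀ m ∈ Finset.Icc 1 7, getZ (applyL l (eL j)) m ≤ 0) :
    S.IsNeg (S.prodW l (S.a j)) := by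
  rw [prodW_a_eq hE l hl hj]
  apply isNeg_combo
  · intro m
    by_cases hm : m ∈ Finset.Icc 1 7
    · exact hneg m hm
    · rw [getZ_applyL_zero l hl hj hm]
  · rw [← prodW_a_eq hE l hl hj]
    exact S.prodW_root l hl (S.simple_mem j hj)

end RootSystemWithBase

/- ===== uniqueness of the longest element ===== -/

namespace RootSystemWithBase

variable {S : RootSystemWithBase V 7}

lemma longest_eq (hE : ∀ i ∈ Finset.Icc 1 7, ∀ j ∈ Finset.Icc 1 7,
      ⟪S.a i, S.a j⟫ = if i = j then 2 else if adjE i j then -1 else 0)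
    (J : Set ℕ) {w : V ≃ₗᵢ[ℝ] V} (hw : S.IsLongest J w) (lst : List ℕ)
    (hlst : ∀ i ∈ lst, i ∈ J ∩ Set.Icc 1 7)
    (hbase : ∀ j ∈ J ∩ Set.Icc 1 7, S.IsNeg (S.prodW lst.reverse (S.a j))) :
    w = S.prodW lst := by
  have hTsub : ∀ m ∈ J ∩ Set.Icc 1 7, m ∈ Finset.Icc 1 7 := fun m hm => by
    rw [Finset.mem_Icc]; exact Set.mem_Icc.mp hm.2
  obtain ⟨lw, hlw, hwl⟩ := S.exists_word J w hw.1
  have hlwI : ∀ i ∈ lw, i ∈ Finset.Icc 1 7 := fun i hi => hTsub i (hlw i hi)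
  have hrevI : ∀ i ∈ lst.reverse, i ∈ Finset.Icc 1 7 :=
    fun i hi => hTsub i (hlst i (List.mem_reverse.mp hi))
  have hu : (S.prodW lst)⁻¹ * w ∈ S.WJ J :=
    mul_mem (inv_mem (S.prodW_mem J lst hlst)) hw.1
  have hkey : ∀ j ∈ J ∩ Set.Icc 1 7, S.IsPos (((S.prodW lst)⁻¹ * w) (S.a j)) := by
    intro j hj
    have hjI : j ∈ Finset.Icc 1 7 := hTsub j hj
    have hneg : S.IsNeg (w (S.a j)) := S.longest_descent hw hj
    set c0 : ℕ → ℤ := applyF lw (fun m => if m = j then 1 else 0) with hc0def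
    have hrep : w (S.a j) = S.combo c0 := by
      rw [hwl, a_eq_combo hjI, prodW_comboF hE lw hlwI]
    have hsupp : ∀ m, m ∉ J ∩ Set.Icc 1 7 → c0 m = 0 := by
      intro m hm
      rw [hc0def, applyF_ne lw (J ∩ Set.Icc 1 7) hlw hm,
        if_neg (fun h => hm (by rw [h]; exact hj))]
    have hc0neg : ∀ m, c0 m ≤ 0 := by
      intro m
      by_cases hmI : m ∈ Finset.Icc 1 7
      · obtain ⟨_, d, hd0, hd⟩ := hneg
        have h2 : S.combo c0 = ∑ i ∈ Finset.Icc 1 7, (-(d i)) • S.a i := by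
          rw [← hrep, ← neg_neg (w (S.a j)), hd, ← Finset.sum_neg_distrib]
          exact Finset.sum_congr rfl (fun i _ => (neg_smul _ _).symm)
        have key := S.coeff_unique h2 m hmI
        have h3 := hd0 m
        have h4 : ((c0 m : ℤ) : ℝ) ≤ 0 := by rw [key]; linarith
        exact_mod_cast h4
      · exact le_of_eq (hsupp m (fun hmT => hmI (hTsub m hmT)))
    have hwaR : w (S.a j) ∈ S.R := by
      rw [hwl]; exact S.prodW_root lw hlwI (S.simple_mem j hjI)
    have hγR : -(w (S.a j)) ∈ S.R := S.neg_mem_R hwaR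
    have hγrep : -(w (S.a j)) = ∑ i ∈ Finset.Icc 1 7, ((-(c0 i) : ℤ) : ℝ) • S.a i := by
      rw [hrep]; exact combo_neg_rep c0
    have hIsNegg := S.neg_image_of_support (J ∩ Set.Icc 1 7) hTsub (S.prodW lst.reverse)
      (fun β hβ => S.prodW_root lst.reverse hrevI hβ) hbase
      ((∑ i ∈ Finset.Icc 1 7, (-(c0 i))).toNat) (-(w (S.a j))) hγR
      (fun m => -(c0 m)) (fun m => by show 0 ≤ -(c0 m); have := hc0neg m; omega)
      (fun m hm => by show -(c0 m) = 0; rw [hsupp m hm]; ring) hγrep rfl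
    have happ : ((S.prodW lst)⁻¹ * w) (S.a j) = S.prodW lst.reverse (w (S.a j)) := by
      rw [mul_apply', S.prodW_inv]
    have hflip : S.prodW lst.reverse (w (S.a j))
        = -(S.prodW lst.reverse (-(w (S.a j)))) := by rw [map_neg, neg_neg]
    rw [happ, hflip]
    exact hIsNegg
  have hu1 : (S.prodW lst)⁻¹ * w = 1 := S.eq_one_of_no_descent hu hkey
  exact (inv_mul_eq_one.mp hu1).symm

end RootSystemWithBase


def laW : List ℕ := [2, 3, 5, 7, 4, 6, 2, 3, 5, 7, 4, 6, 2, 3, 5, 7, 4, 6, 2, 3, 5, 7, 4, 6, 2, 3, 5, 7, 4, 6]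
def lvW : List ℕ := [1, 3, 4, 5, 2, 4, 3, 6, 5, 4, 1, 2, 3, 7, 6, 5, 4]
def lb2W : List ℕ := [3, 4, 3, 5, 4, 3, 6, 5, 4, 3, 7, 6, 5, 4, 3]
def lb3W : List ℕ := [2, 4, 2, 5, 4, 2, 6, 5, 4, 2, 7, 6, 5, 4, 2]
def lb4W : List ℕ := [2, 3, 5, 6, 5, 7, 6, 5]
def lb5W : List ℕ := [2, 4, 2, 3, 4, 2, 6, 7, 6]
def lb6W : List ℕ := [2, 3, 5, 4, 2, 3, 5, 4, 2, 3, 5, 4, 7]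

end Aux

/-- In type `E_7`, with `v_4` as above:
(1) `w_{0, S∖{α_1, α_2}}(α_1) = α_1 + α_3 + α_4 + α_5 + α_6 + α_7` and
`v_4⁻¹ w_{0, S∖{α_1}} w_{0, S∖{α_1, α_2}}(α_1) = α_5 + α_6 + α_7`;
(2) `w_{0, S∖{α_1, α_3}}(α_1) = α_1` and
`v_4⁻¹ w_{0, S∖{α_1}} w_{0, S∖{α_1, α_3}}(α_1) = α_1 + 2α_2 + 2α_3 + 3α_4 + 3α_5 + 2α_6 + α_7`;
(3) `w_{0, S∖{α_1, α_4}}(α_1) = α_1 + α_3` and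
`v_4⁻¹ w_{0, S∖{α_1}} w_{0, S∖{α_1, α_4}}(α_1) = α_1 + α_2 + 2α_3 + 2α_4 + 2α_5 + 2α_6 + α_7`;
(4) `w_{0, S∖{α_1, α_5}}(α_1) = α_1 + α_2 + α_3 + α_4` and
`v_4⁻¹ w_{0, S∖{α_1}} w_{0, S∖{α_1, α_5}}(α_1) = α_1 + α_2 + 2α_3 + 2α_4 + 2α_5 + α_6`;
(5) `w_{0, S∖{α_1, α_6}}(α_1) = α_1 + α_2 + 2α_3 + 2α_4 + α_5` and
`v_4⁻¹ w_{0, S∖{α_1}} w_{0, S∖{α_1, α_6}}(α_1) = α_1 + α_3`. -/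
theorem statement15 (S : RootSystemWithBase V 7)
    (hE : ∀ i ∈ Finset.Icc 1 7, ∀ j ∈ Finset.Icc 1 7,
      ⟪S.a i, S.a j⟫ = if i = j then 2 else if adjE i j then -1 else 0)
    (w0a : V ≃ₗᵢ[ℝ] V) (hw0a : S.IsLongest (Set.Icc 1 7 \ {1}) w0a) :
    (∀ w0b : V ≃ₗᵢ[ℝ] V, S.IsLongest (Set.Icc 1 7 \ {1, 2}) w0b →
      w0b (S.a 1) = S.a 1 + S.a 3 + S.a 4 + S.a 5 + S.a 6 + S.a 7 ∧
      (v4E7 S)⁻¹ (w0a (w0b (S.a 1))) = S.a 5 + S.a 6 + S.a 7) ∧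
    (∀ w0b : V ≃ₗᵢ[ℝ] V, S.IsLongest (Set.Icc 1 7 \ {1, 3}) w0b →
      w0b (S.a 1) = S.a 1 ∧
      (v4E7 S)⁻¹ (w0a (w0b (S.a 1))) =
        S.a 1 + (2 : ℝ) • S.a 2 + (2 : ℝ) • S.a 3 + (3 : ℝ) • S.a 4 + (3 : ℝ) • S.a 5 +
          (2 : ℝ) • S.a 6 + S.a 7) ∧
    (∀ w0b : V ≃ₗᵢ[ℝ] V, S.IsLongest (Set.Icc 1 7 \ {1, 4}) w0b →
      w0b (S.a 1) = S.a 1 + S.a 3 ∧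
      (v4E7 S)⁻¹ (w0a (w0b (S.a 1))) =
        S.a 1 + S.a 2 + (2 : ℝ) • S.a 3 + (2 : ℝ) • S.a 4 + (2 : ℝ) • S.a 5 +
          (2 : ℝ) • S.a 6 + S.a 7) ∧
    (∀ w0b : V ≃ₗᵢ[ℝ] V, S.IsLongest (Set.Icc 1 7 \ {1, 5}) w0b →
      w0b (S.a 1) = S.a 1 + S.a 2 + S.a 3 + S.a 4 ∧
      (v4E7 S)⁻¹ (w0a (w0b (S.a 1))) =
        S.a 1 + S.a 2 + (2 : ℝ) • S.a 3 + (2 : ℝ) • S.a 4 + (2 : ℝ) • S.a 5 + S.a 6) ∧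
    (∀ w0b : V ≃ₗᵢ[ℝ] V, S.IsLongest (Set.Icc 1 7 \ {1, 6}) w0b →
      w0b (S.a 1) = S.a 1 + S.a 2 + (2 : ℝ) • S.a 3 + (2 : ℝ) • S.a 4 + S.a 5 ∧
      (v4E7 S)⁻¹ (w0a (w0b (S.a 1))) = S.a 1 + S.a 3) := by
  classical
  have hv : v4E7 S = S.prodW lvW := rfl
  have ha : w0a = S.prodW laW := by
    apply RootSystemWithBase.longest_eq hE _ hw0a laW
    · intro i hi
      obtain ⟨h2, h7⟩ := (by decide : ∀ m ∈ laW, 2 ≤ m ∧ m ≤ 7) i hi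
      refine ⟨⟨Set.mem_Icc.mpr ⟨by omega, h7⟩, ?_⟩, Set.mem_Icc.mpr ⟨by omega, h7⟩⟩
      simp only [Set.mem_singleton_iff]
      omega
    · intro j hj
      obtain ⟨⟨hj1, hj2⟩, _⟩ := hj
      rw [Set.mem_Icc] at hj1
      simp only [Set.mem_singleton_iff] at hj2
      have h2 : 2 ≤ j := by omega
      have h7 : j ≤ 7 := hj1.2
      interval_cases j <;>
        exact RootSystemWithBase.isNeg_prodW hE _ _ (by decide) (by decide) (by decide)
  refine ⟨?_, ?_, ?_, ?_, ?_⟩ <;> intro w0b hw0b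
  · have hb : w0b = S.prodW lb2W := by
      apply RootSystemWithBase.longest_eq hE _ hw0b lb2W
      · intro i hi
        obtain ⟨h1, h7, hn1, hnk⟩ :=
          (by decide : ∀ m ∈ lb2W, 1 ≤ m ∧ m ≤ 7 ∧ m ≠ 1 ∧ m ≠ 2) i hi
        refine ⟨⟨Set.mem_Icc.mpr ⟨h1, h7⟩, ?_⟩, Set.mem_Icc.mpr ⟨h1, h7⟩⟩
        simp only [Set.mem_insert_iff, Set.mem_singleton_iff]
        push_neg
        exact ⟨hn1, hnk⟩
      · intro j hj
        obtain ⟨⟨hjm, hj2⟩, _⟩ := hj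
        rw [Set.mem_Icc] at hjm
        simp only [Set.mem_insert_iff, Set.mem_singleton_iff] at hj2
        push_neg at hj2
        have h1 : 1 ≤ j := hjm.1
        have h7 : j ≤ 7 := hjm.2
        have hne1 : j ≠ 1 := hj2.1
        have hnek : j ≠ 2 := hj2.2
        interval_cases j <;>
          first
          | omega
          | exact RootSystemWithBase.isNeg_prodW hE _ _ (by decide) (by decide) (by decide)
    constructor
    · rw [hb, RootSystemWithBase.prodW_a_eq hE lb2W (by decide) (by decide), S.combo_eval]
      norm_num [show applyL lb2W (eL 1) = [0, 1, 0, 1, 1, 1, 1, 1] from by decide, getZ]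
    · rw [hb, ha, hv, S.prodW_inv, ← S.prodW_apply_append, ← S.prodW_apply_append,
        RootSystemWithBase.prodW_a_eq hE _ (by decide) (by decide), S.combo_eval]
      norm_num [show applyL (lvW.reverse ++ (laW ++ lb2W)) (eL 1)
        = [0, 0, 0, 0, 0, 1, 1, 1] from by decide, getZ]
  · have hb : w0b = S.prodW lb3W := by
      apply RootSystemWithBase.longest_eq hE _ hw0b lb3W
      · intro i hi
        obtain ⟨h1, h7, hn1, hnk⟩ :=
          (by decide : ∀ m ∈ lb3W, 1 ≤ m ∧ m ≤ 7 ∧ m ≠ 1 ∧ m ≠ 3) i hi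
        refine ⟨⟨Set.mem_Icc.mpr ⟨h1, h7⟩, ?_⟩, Set.mem_Icc.mpr ⟨h1, h7⟩⟩
        simp only [Set.mem_insert_iff, Set.mem_singleton_iff]
        push_neg
        exact ⟨hn1, hnk⟩
      · intro j hj
        obtain ⟨⟨hjm, hj2⟩, _⟩ := hj
        rw [Set.mem_Icc] at hjm
        simp only [Set.mem_insert_iff, Set.mem_singleton_iff] at hj2
        push_neg at hj2
        have h1 : 1 ≤ j := hjm.1
        have h7 : j ≤ 7 := hjm.2
        have hne1 : j ≠ 1 := hj2.1
        have hnek : j ≠ 3 := hj2.2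
        interval_cases j <;>
          first
          | omega
          | exact RootSystemWithBase.isNeg_prodW hE _ _ (by decide) (by decide) (by decide)
    constructor
    · rw [hb, RootSystemWithBase.prodW_a_eq hE lb3W (by decide) (by decide), S.combo_eval]
      norm_num [show applyL lb3W (eL 1) = [0, 1, 0, 0, 0, 0, 0, 0] from by decide, getZ]
    · rw [hb, ha, hv, S.prodW_inv, ← S.prodW_apply_append, ← S.prodW_apply_append,
        RootSystemWithBase.prodW_a_eq hE _ (by decide) (by decide), S.combo_eval]
      norm_num [show applyL (lvW.reverse ++ (laW ++ lb3W)) (eL 1)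
        = [0, 1, 2, 2, 3, 3, 2, 1] from by decide, getZ]
  · have hb : w0b = S.prodW lb4W := by
      apply RootSystemWithBase.longest_eq hE _ hw0b lb4W
      · intro i hi
        obtain ⟨h1, h7, hn1, hnk⟩ :=
          (by decide : ∀ m ∈ lb4W, 1 ≤ m ∧ m ≤ 7 ∧ m ≠ 1 ∧ m ≠ 4) i hi
        refine ⟨⟨Set.mem_Icc.mpr ⟨h1, h7⟩, ?_⟩, Set.mem_Icc.mpr ⟨h1, h7⟩⟩
        simp only [Set.mem_insert_iff, Set.mem_singleton_iff]
        push_neg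
        exact ⟨hn1, hnk⟩
      · intro j hj
        obtain ⟨⟨hjm, hj2⟩, _⟩ := hj
        rw [Set.mem_Icc] at hjm
        simp only [Set.mem_insert_iff, Set.mem_singleton_iff] at hj2
        push_neg at hj2
        have h1 : 1 ≤ j := hjm.1
        have h7 : j ≤ 7 := hjm.2
        have hne1 : j ≠ 1 := hj2.1
        have hnek : j ≠ 4 := hj2.2
        interval_cases j <;>
          first
          | omega
          | exact RootSystemWithBase.isNeg_prodW hE _ _ (by decide) (by decide) (by decide)
    constructor
    · rw [hb, RootSystemWithBase.prodW_a_eq hE lb4W (by decide) (by decide), S.combo_eval]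
      norm_num [show applyL lb4W (eL 1) = [0, 1, 0, 1, 0, 0, 0, 0] from by decide, getZ]
    · rw [hb, ha, hv, S.prodW_inv, ← S.prodW_apply_append, ← S.prodW_apply_append,
        RootSystemWithBase.prodW_a_eq hE _ (by decide) (by decide), S.combo_eval]
      norm_num [show applyL (lvW.reverse ++ (laW ++ lb4W)) (eL 1)
        = [0, 1, 1, 2, 2, 2, 2, 1] from by decide, getZ]
  · have hb : w0b = S.prodW lb5W := by
      apply RootSystemWithBase.longest_eq hE _ hw0b lb5W
      · intro i hi
        obtain ⟨h1, h7, hn1, hnk⟩ :=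
          (by decide : ∀ m ∈ lb5W, 1 ≤ m ∧ m ≤ 7 ∧ m ≠ 1 ∧ m ≠ 5) i hi
        refine ⟨⟨Set.mem_Icc.mpr ⟨h1, h7⟩, ?_⟩, Set.mem_Icc.mpr ⟨h1, h7⟩⟩
        simp only [Set.mem_insert_iff, Set.mem_singleton_iff]
        push_neg
        exact ⟨hn1, hnk⟩
      · intro j hj
        obtain ⟨⟨hjm, hj2⟩, _⟩ := hj
        rw [Set.mem_Icc] at hjm
        simp only [Set.mem_insert_iff, Set.mem_singleton_iff] at hj2
        push_neg at hj2
        have h1 : 1 ≤ j := hjm.1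
        have h7 : j ≤ 7 := hjm.2
        have hne1 : j ≠ 1 := hj2.1
        have hnek : j ≠ 5 := hj2.2
        interval_cases j <;>
          first
          | omega
          | exact RootSystemWithBase.isNeg_prodW hE _ _ (by decide) (by decide) (by decide)
    constructor
    · rw [hb, RootSystemWithBase.prodW_a_eq hE lb5W (by decide) (by decide), S.combo_eval]
      norm_num [show applyL lb5W (eL 1) = [0, 1, 1, 1, 1, 0, 0, 0] from by decide, getZ]
    · rw [hb, ha, hv, S.prodW_inv, ← S.prodW_apply_append, ← S.prodW_apply_append,
        RootSystemWithBase.prodW_a_eq hE _ (by decide) (by decide), S.combo_eval]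
      norm_num [show applyL (lvW.reverse ++ (laW ++ lb5W)) (eL 1)
        = [0, 1, 1, 2, 2, 2, 1, 0] from by decide, getZ]
  · have hb : w0b = S.prodW lb6W := by
      apply RootSystemWithBase.longest_eq hE _ hw0b lb6W
      · intro i hi
        obtain ⟨h1, h7, hn1, hnk⟩ :=
          (by decide : ∀ m ∈ lb6W, 1 ≤ m ∧ m ≤ 7 ∧ m ≠ 1 ∧ m ≠ 6) i hi
        refine ⟨⟨Set.mem_Icc.mpr ⟨h1, h7⟩, ?_⟩, Set.mem_Icc.mpr ⟨h1, h7⟩⟩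
        simp only [Set.mem_insert_iff, Set.mem_singleton_iff]
        push_neg
        exact ⟨hn1, hnk⟩
      · intro j hj
        obtain ⟨⟨hjm, hj2⟩, _⟩ := hj
        rw [Set.mem_Icc] at hjm
        simp only [Set.mem_insert_iff, Set.mem_singleton_iff] at hj2
        push_neg at hj2
        have h1 : 1 ≤ j := hjm.1
        have h7 : j ≤ 7 := hjm.2
        have hne1 : j ≠ 1 := hj2.1
        have hnek : j ≠ 6 := hj2.2
        interval_cases j <;>
          first
          | omega
          | exact RootSystemWithBase.isNeg_prodW hE _ _ (by decide) (by decide) (by decide)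
    constructor
    · rw [hb, RootSystemWithBase.prodW_a_eq hE lb6W (by decide) (by decide), S.combo_eval]
      norm_num [show applyL lb6W (eL 1) = [0, 1, 1, 2, 2, 1, 0, 0] from by decide, getZ]
    · rw [hb, ha, hv, S.prodW_inv, ← S.prodW_apply_append, ← S.prodW_apply_append,
        RootSystemWithBase.prodW_a_eq hE _ (by decide) (by decide), S.combo_eval]
      norm_num [show applyL (lvW.reverse ++ (laW ++ lb6W)) (eL 1)
        = [0, 1, 0, 1, 0, 0, 0, 0] from by decide, getZ]


end PaperFormal
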